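/- Any quantum relative entropy 𝐃 evaluated on the classical pair (|0⟩⟨0|, (1−ε)|0⟩⟨0| + ε|1⟩⟨1|) equals −log₂(1−ε) for all ε ∈ [0,1). -/

import Mathlib

open scoped ENNReal Kronecker ComplexOrder Matrix
open Classical

/-- A density matrix: positive semidefinite with unit trace. -/
def IsDensity {n : Type} [Fintype n] (ρ : Matrix n n ℂ) : Prop :=
  ρ.PosSemidef ∧ ρ.trace = 1

/-- The extension `id_m ⊗ Φ` of a map `Φ` on matrices, acting blockwise. -/
def cpExt {a b : Type} (Φ : Matrix a a ℂ → Matrix b b ℂ) (m : Type)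
    (M : Matrix (m × a) (m × a) ℂ) : Matrix (m × b) (m × b) ℂ :=
  Matrix.of fun p q => Φ (Matrix.of fun k l => M (p.1, k) (q.1, l)) p.2 q.2

/-- A map on matrices is completely positive if every extension `id_m ⊗ Φ`
preserves positive semidefiniteness. -/
def IsCP {a b : Type} [Fintype a] [Fintype b] (Φ : Matrix a a ℂ → Matrix b b ℂ) : Prop :=
  ∀ (m : Type) [Fintype m] (M : Matrix (m × a) (m × a) ℂ),
    M.PosSemidef → (cpExt Φ m M).PosSemidef

/-- A quantum channel: a linear, completely positive, trace-preserving map. -/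
def IsCPTP {a b : Type} [Fintype a] [Fintype b] (Φ : Matrix a a ℂ → Matrix b b ℂ) : Prop :=
  (∀ (c : ℂ) (A B : Matrix a a ℂ), Φ (c • A + B) = c • Φ A + Φ B) ∧
    IsCP Φ ∧ ∀ A : Matrix a a ℂ, (Φ A).trace = A.trace

/-- The projector onto the support of a Hermitian matrix. -/
noncomputable def suppProj {n : Type} [Fintype n] [DecidableEq n]
    (ρ : Matrix n n ℂ) : Matrix n n ℂ :=
  if h : ρ.IsHermitian then
    (h.eigenvectorUnitary : Matrix n n ℂ) *
      Matrix.diagonal (fun i => if h.eigenvalues i = 0 then (0 : ℂ) else 1) *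
      (h.eigenvectorUnitary : Matrix n n ℂ)ᴴ
  else 0

/-- The min relative entropy `D_min(ρ‖σ) = -log₂ Tr[Π_ρ σ]` (with value `+∞` if
`Tr[Π_ρ σ] = 0`, i.e. if `ρ ⊥ σ`). -/
noncomputable def Dmin {n : Type} [Fintype n] [DecidableEq n]
    (ρ σ : Matrix n n ℂ) : ℝ≥0∞ :=
  if ((suppProj ρ * σ).trace.re) = 0 then ∞
  else ENNReal.ofReal (- Real.logb 2 ((suppProj ρ * σ).trace.re))

/-- The max relative entropy `D_max(ρ‖σ) = log₂ min {t : tσ ≥ ρ}` (with value `+∞`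
if no such `t` exists, i.e. if `supp ρ ⊄ supp σ`). -/
noncomputable def Dmax {n : Type} [Fintype n]
    (ρ σ : Matrix n n ℂ) : ℝ≥0∞ :=
  if ∃ t : ℝ, ((t : ℂ) • σ - ρ).PosSemidef then
    ENNReal.ofReal (Real.logb 2 (sInf {t : ℝ | ((t : ℂ) • σ - ρ).PosSemidef}))
  else ∞

/-! ### Auxiliary machinery: classical channels -/

/-- A classical channel built from a stochastic matrix `T`: measure in the standard
basis and prepare the corresponding diagonal output. -/
noncomputable def classChan {a b : Type} [Fintype a] [DecidableEq b]
    (T : b → a → ℝ) (M : Matrix a a ℂ) : Matrix b b ℂ :=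
  Matrix.diagonal (fun j => ∑ i, (T j i : ℂ) * M i i)

lemma classChan_linear {a b : Type} [Fintype a] [DecidableEq b] (T : b → a → ℝ)
    (c : ℂ) (A B : Matrix a a ℂ) :
    classChan T (c • A + B) = c • classChan T A + classChan T B := by
  unfold classChan
  ext j k
  by_cases h : j = k
  · subst h
    simp only [Matrix.diagonal_apply_eq, Matrix.add_apply, Matrix.smul_apply,
      Matrix.diagonal_apply_eq, smul_eq_mul, mul_add, Finset.sum_add_distrib,
      Finset.mul_sum, mul_left_comm]
  · simp [Matrix.diagonal_apply_ne _ h, h]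

lemma classChan_trace {a b : Type} [Fintype a] [Fintype b] [DecidableEq b] (T : b → a → ℝ)
    (hT1 : ∀ i, ∑ j, T j i = 1) (M : Matrix a a ℂ) :
    (classChan T M).trace = M.trace := by
  unfold classChan
  rw [Matrix.trace_diagonal, Finset.sum_comm, Matrix.trace]
  congr 1
  funext i
  rw [← Finset.sum_mul]
  have : (∑ j, (T j i : ℂ)) = 1 := by
    rw [← Complex.ofReal_sum, hT1 i, Complex.ofReal_one]
  rw [this, one_mul]
  rfl

lemma classChan_isCP {a b : Type} [Fintype a] [Fintype b] [DecidableEq b] (T : b → a → ℝ)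
    (hT0 : ∀ j i, 0 ≤ T j i) : IsCP (classChan T) := by
  intro m _ M hM
  refine Matrix.posSemidef_iff_dotProduct_mulVec.mpr ⟨?_, ?_⟩
  · ext ⟨p, j⟩ ⟨q, j'⟩
    simp only [cpExt, classChan, Matrix.conjTranspose_apply, Matrix.of_apply,
      Matrix.diagonal_apply]
    by_cases h : j = j'
    · subst h
      rw [if_pos rfl, if_pos rfl, star_sum]
      refine Finset.sum_congr rfl fun i _ => ?_
      rw [star_mul', Complex.star_def, Complex.conj_ofReal, ← Complex.star_def,
        ← Matrix.conjTranspose_apply, hM.1]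
    · simp [h, Ne.symm h]
  · intro x
    set v : a → b → (m × a) → ℂ := fun i j r => if r.2 = i then x (r.1, j) else 0 with hv
    have key : dotProduct (star x) ((cpExt (classChan T) m M) *ᵥ x)
        = ∑ j, ∑ i, (T j i : ℂ) * (dotProduct (star (v i j)) (M *ᵥ (v i j))) := by
      simp only [dotProduct, Matrix.mulVec, Fintype.sum_prod_type, cpExt, classChan,
        Matrix.of_apply, Matrix.diagonal_apply, Pi.star_apply, hv, apply_ite (star : ℂ → ℂ),
        star_zero, ite_mul, mul_ite, zero_mul, mul_zero, Finset.sum_ite_eq,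
        Finset.sum_ite_eq', Finset.mem_univ, if_true, Finset.mul_sum, Finset.sum_mul]
      conv_rhs => enter [2, j, 2, i, 2, p]; rw [Finset.sum_comm]
      simp only [Finset.sum_ite_eq', Finset.mem_univ, if_true]
      rw [Finset.sum_comm]
      refine Finset.sum_congr rfl fun j _ => ?_
      have h1 : ∀ p : m, (∑ q : m, ∑ i : a, star (x (p, j)) * (↑(T j i) * M (p, i) (q, i) * x (q, j)))
          = ∑ i : a, ∑ q : m, star (x (p, j)) * (↑(T j i) * M (p, i) (q, i) * x (q, j)) :=
        fun p => Finset.sum_comm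
      simp_rw [h1]
      rw [Finset.sum_comm]
      refine Finset.sum_congr rfl fun i _ => Finset.sum_congr rfl fun p _ =>
        Finset.sum_congr rfl fun q _ => by ring
    rw [key]
    refine Finset.sum_nonneg fun j _ => Finset.sum_nonneg fun i _ => mul_nonneg ?_ (hM.dotProduct_mulVec_nonneg _)
    rw [Complex.zero_le_real]
    exact hT0 j i

lemma classChan_isCPTP {a b : Type} [Fintype a] [Fintype b] [DecidableEq b] (T : b → a → ℝ)
    (hT0 : ∀ j i, 0 ≤ T j i) (hT1 : ∀ i, ∑ j, T j i = 1) : IsCPTP (classChan T) :=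
  ⟨classChan_linear T, classChan_isCP T hT0, classChan_trace T hT1⟩

/-! ### Diagonal density matrices -/

lemma isDensity_realDiag {n : Type} [Fintype n] [DecidableEq n] (v : n → ℝ)
    (h0 : ∀ i, 0 ≤ v i) (h1 : ∑ i, v i = 1) :
    IsDensity (Matrix.diagonal fun i => ((v i : ℝ) : ℂ)) := by
  constructor
  · exact Matrix.PosSemidef.diagonal fun i => Complex.zero_le_real.2 (h0 i)
  · rw [Matrix.trace_diagonal, ← Complex.ofReal_sum, h1, Complex.ofReal_one]

/-- The diagonal qubit state with distribution `(1-e, e)`. -/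
noncomputable def qd (e : ℝ) : Matrix (Fin 2) (Fin 2) ℂ :=
  Matrix.diagonal fun i => ((![1 - e, e] i : ℝ) : ℂ)

lemma qd_isDensity (e : ℝ) (h0 : 0 ≤ e) (h1 : e ≤ 1) : IsDensity (qd e) := by
  refine isDensity_realDiag _ (fun i => ?_) (by simp [Fin.sum_univ_two])
  fin_cases i <;> simp <;> linarith

lemma qd_kron (a b : ℝ) : qd a ⊗ₖ qd b =
    Matrix.diagonal fun i : Fin 2 × Fin 2 => ((![1-a,a] i.1 * ![1-b,b] i.2 : ℝ) : ℂ) := by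
  rw [qd, qd, Matrix.diagonal_kronecker_diagonal]
  congr 1
  funext i
  push_cast
  ring

lemma qd_kron_isDensity (a b : ℝ) (ha0 : 0 ≤ a) (ha1 : a ≤ 1) (hb0 : 0 ≤ b) (hb1 : b ≤ 1) :
    IsDensity (qd a ⊗ₖ qd b) := by
  rw [qd_kron]
  refine isDensity_realDiag _ (fun i => ?_) ?_
  · have hx : ∀ j : Fin 2, 0 ≤ ![1-a,a] j := fun j => by fin_cases j <;> simp <;> linarith
    have hy : ∀ j : Fin 2, 0 ≤ ![1-b,b] j := fun j => by fin_cases j <;> simp <;> linarith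
    exact mul_nonneg (hx i.1) (hy i.2)
  · simp [Fintype.sum_prod_type, Fin.sum_univ_two]
    ring

/-! ### The three channels -/

/-- collapse channel on two bits: `(0,0) ↦ 0`, everything else `↦ 1`. -/
def T1 : Fin 2 → Fin 2 × Fin 2 → ℝ := fun j i =>
  if i = ((0 : Fin 2), (0 : Fin 2)) then (if j = 0 then 1 else 0) else (if j = 1 then 1 else 0)

/-- mixing channel: `0 ↦ 0`, `1 ↦ (a, 1-a)`. -/
def T2 (a : ℝ) : Fin 2 → Fin 2 → ℝ := fun j i =>
  if i = 0 then (if j = 0 then 1 else 0) else (if j = 0 then a else 1 - a)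

/-- splitting channel: `0 ↦ (0,0)`, `1 ↦` conditional distribution. -/
noncomputable def T3 (e e' : ℝ) : Fin 2 × Fin 2 → Fin 2 → ℝ := fun j i =>
  if i = 0 then (if j = ((0:Fin 2),(0:Fin 2)) then 1 else 0)
  else if 1 - (1 - e) * (1 - e') = 0 then (if j = ((1:Fin 2),(1:Fin 2)) then 1 else 0)
  else (if j.1 = 0 then (if j.2 = 0 then 0 else (1 - e) * e')
        else (if j.2 = 0 then e * (1 - e') else e * e')) / (1 - (1 - e) * (1 - e'))

lemma T1_nonneg : ∀ j i, 0 ≤ T1 j i := by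
  intro j i; unfold T1; split_ifs <;> norm_num

lemma T1_sum : ∀ i, ∑ j, T1 j i = 1 := by
  intro i
  by_cases h : i = ((0:Fin 2),(0:Fin 2)) <;> simp [T1, h, Fin.sum_univ_two]

lemma T2_nonneg (a : ℝ) (h0 : 0 ≤ a) (h1 : a ≤ 1) : ∀ j i, 0 ≤ T2 a j i := by
  intro j i; unfold T2; split_ifs <;> norm_num <;> linarith

lemma T2_sum (a : ℝ) : ∀ i, ∑ j, T2 a j i = 1 := by
  intro i
  by_cases h : i = 0 <;> simp [T2, h, Fin.sum_univ_two]

lemma T3_nonneg (a b : ℝ) (ha0 : 0 ≤ a) (ha1 : a ≤ 1) (hb0 : 0 ≤ b) (hb1 : b ≤ 1) :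
    ∀ j i, 0 ≤ T3 a b j i := by
  intro j i
  have hE : 0 ≤ 1 - (1 - a) * (1 - b) := by nlinarith
  unfold T3
  split_ifs <;> try norm_num
  all_goals apply div_nonneg _ hE
  all_goals nlinarith

lemma T3_sum (a b : ℝ) : ∀ i, ∑ j, T3 a b j i = 1 := by
  intro i
  fin_cases i
  · simp [T3, Fintype.sum_prod_type, Fin.sum_univ_two]
  · by_cases hE : 1 - (1 - a) * (1 - b) = 0
    · simp [T3, hE, Fintype.sum_prod_type, Fin.sum_univ_two]
    · simp [T3, hE, Fintype.sum_prod_type, Fin.sum_univ_two]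
      field_simp
      ring

lemma chan1_apply (a b : ℝ) :
    classChan T1 (qd a ⊗ₖ qd b) = qd (1 - (1 - a) * (1 - b)) := by
  rw [qd_kron, classChan, qd]
  refine congrArg Matrix.diagonal (funext fun j => ?_)
  fin_cases j <;>
    simp [T1, Fintype.sum_prod_type, Fin.sum_univ_two, Matrix.diagonal_apply_eq] <;>
    push_cast <;> ring

lemma chan2_apply (a e : ℝ) :
    classChan (T2 a) (qd e) = qd ((1 - a) * e) := by
  rw [classChan, qd, qd]
  refine congrArg Matrix.diagonal (funext fun j => ?_)
  fin_cases j <;>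
    simp [T2, Fin.sum_univ_two, Matrix.diagonal_apply_eq] <;>
    push_cast <;> ring

lemma chan3_apply_zero (e e' : ℝ) :
    classChan (T3 e e') (qd 0) = qd 0 ⊗ₖ qd 0 := by
  rw [classChan, qd_kron, qd]
  refine congrArg Matrix.diagonal (funext fun j => ?_)
  fin_cases j <;>
    simp [T3, Fin.sum_univ_two, Matrix.diagonal_apply_eq] <;>
    push_cast <;> ring

lemma chan3_apply (e e' : ℝ) (he0 : 0 ≤ e) (he1 : e < 1) (hf0 : 0 ≤ e') (hf1 : e' < 1) :
    classChan (T3 e e') (qd (1 - (1 - e) * (1 - e'))) = qd e ⊗ₖ qd e' := by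
  rw [classChan, qd_kron, qd]
  refine congrArg Matrix.diagonal (funext fun j => ?_)
  by_cases hE : 1 - (1 - e) * (1 - e') = 0
  · have he : e = 0 := by nlinarith
    have hf : e' = 0 := by nlinarith
    subst he; subst hf
    fin_cases j <;>
      simp [T3, Fin.sum_univ_two, Matrix.diagonal_apply_eq] <;> norm_num
  · have hE' : e - e * e' + e' ≠ 0 := fun h => hE (by linear_combination h)
    have hEc : ((e:ℂ) - e * e' + e') ≠ 0 := by
      rw [show ((e:ℂ) - e*e' + e') = ((e - e*e' + e' : ℝ) : ℂ) by push_cast; ring]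
      exact_mod_cast hE'
    fin_cases j <;>
      · simp only [T3, Fin.sum_univ_two, Matrix.diagonal_apply_eq, if_neg hE,
          Matrix.cons_val_zero, Matrix.cons_val_one, Matrix.head_cons]
        norm_num
        try norm_cast
        try field_simp
        try ring
        try (have hX : (e - e * e' + e') * (e - e * e' + e')⁻¹ = 1 := mul_inv_cancel₀ hE'; linear_combination (e - e * e') * hX)

/-! ### Additive monotone functions on `[0,∞)` valued in `ℝ≥0∞` are linear -/

lemma lin_of_add_mono (g : ℝ → ℝ≥0∞)
    (hmono : ∀ ⦃x y : ℝ⦄, 0 ≤ x → x ≤ y → g x ≤ g y)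
    (hadd : ∀ x y : ℝ, 0 ≤ x → 0 ≤ y → g (x + y) = g x + g y)
    (h1 : g 1 = 1) : ∀ x : ℝ, 0 ≤ x → g x = ENNReal.ofReal x := by
  have hg0le : g 0 ≤ 1 := by
    have h := hadd 0 1 le_rfl zero_le_one
    rw [zero_add, h1] at h
    calc g 0 ≤ g 0 + 1 := le_self_add
      _ = 1 := h.symm
  have hnatle : ∀ n : ℕ, g n ≤ n + 1 := by
    intro n
    induction n with
    | zero => simpa using hg0le
    | succ k ih =>
      have h := hadd k 1 (Nat.cast_nonneg k) zero_le_one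
      push_cast
      rw [h, h1]
      exact add_le_add ih le_rfl
  have hfin : ∀ x : ℝ, 0 ≤ x → g x ≠ ∞ := by
    intro x hx
    have h2 : g x ≤ (⌈x⌉₊ : ℝ≥0∞) + 1 := le_trans (hmono hx (Nat.le_ceil x)) (hnatle _)
    exact ne_top_of_le_ne_top (by simp) h2
  set h : ℝ → ℝ := fun x => (g x).toReal with hh
  have hadd' : ∀ x y : ℝ, 0 ≤ x → 0 ≤ y → h (x + y) = h x + h y := by
    intro x y hx hy
    simp only [hh, hadd x y hx hy, ENNReal.toReal_add (hfin x hx) (hfin y hy)]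
  have hmono' : ∀ ⦃x y : ℝ⦄, 0 ≤ x → x ≤ y → h x ≤ h y := by
    intro x y hx hxy
    exact ENNReal.toReal_mono (hfin y (hx.trans hxy)) (hmono hx hxy)
  have hone : h 1 = 1 := by simp [hh, h1]
  have hzero : h 0 = 0 := by
    have := hadd' 0 0 le_rfl le_rfl
    simp only [add_zero] at this
    linarith
  have hsmul : ∀ (n : ℕ) (x : ℝ), 0 ≤ x → h (n * x) = n * h x := by
    intro n
    induction n with
    | zero => intro x hx; simpa using hzero
    | succ k ih =>
      intro x hx
      have : ((k : ℝ) + 1) * x = k * x + x := by ring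
      push_cast
      rw [this, hadd' _ _ (by positivity) hx, ih x hx]
      ring
  have hnat : ∀ n : ℕ, h n = n := by
    intro n
    have := hsmul n 1 zero_le_one
    simpa [hone] using this
  have hrat : ∀ q : ℚ, 0 ≤ q → h q = q := by
    intro q hq
    have hden : (0:ℝ) < (q.den : ℝ) := by positivity
    have hnum : ((q.num.toNat : ℝ)) = (q.den : ℝ) * (q : ℝ) := by
      push_cast [Int.toNat_of_nonneg (Rat.num_nonneg.2 hq), Rat.cast_def]
      field_simp
      exact_mod_cast Int.toNat_of_nonneg (Rat.num_nonneg.2 hq)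
    have h2 := hsmul q.den (q : ℝ) (by exact_mod_cast hq)
    have h3 : h (q.num.toNat : ℝ) = (q.num.toNat : ℝ) := hnat _
    rw [hnum] at h3
    rw [h2] at h3
    have := mul_left_cancel₀ (ne_of_gt hden) h3
    linarith [this]
  have hhx : ∀ x : ℝ, 0 ≤ x → h x = x := by
    intro x hx
    have hle : h x ≤ x := by
      refine le_of_forall_pos_le_add fun δ hδ => ?_
      obtain ⟨s, hs1, hs2⟩ := exists_rat_btwn (lt_add_of_pos_right x hδ)
      have hs0 : (0:ℚ) ≤ s := by exact_mod_cast hx.trans hs1.le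
      calc h x ≤ h s := hmono' hx hs1.le
        _ = s := hrat s hs0
        _ ≤ x + δ := hs2.le
    have hge : x ≤ h x := by
      refine le_of_forall_pos_le_add fun δ hδ => ?_
      rcases lt_or_ge x δ with hc | hc
      · have : 0 ≤ h x := ENNReal.toReal_nonneg
        linarith
      · obtain ⟨r, hr1, hr2⟩ := exists_rat_btwn (show x - δ < x by linarith)
        have hr0 : (0:ℚ) ≤ r := by
          have : (0:ℝ) ≤ x - δ := by linarith
          exact_mod_cast this.trans hr1.le
        have : (r : ℝ) ≤ h x := by
          rw [← hrat r hr0]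
          exact hmono' (by exact_mod_cast hr0) hr2.le
        linarith
    linarith
  intro x hx
  rw [← ENNReal.ofReal_toReal (hfin x hx)]
  rw [show (g x).toReal = x from hhx x hx]
/-- Any quantum relative entropy evaluated on the classical pair
`(|0⟩⟨0|, (1-ε)|0⟩⟨0| + ε|1⟩⟨1|)` equals `-log₂(1-ε)`. -/
theorem stmt6
    (D : ∀ (m : Type) [Fintype m] [DecidableEq m],
      Matrix m m ℂ → Matrix m m ℂ → ℝ≥0∞)
    -- data-processing inequality under quantum channels
    (hdpi : ∀ (a b : Type) [Fintype a] [DecidableEq a] [Fintype b] [DecidableEq b]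
      (Φ : Matrix a a ℂ → Matrix b b ℂ), IsCPTP Φ →
      ∀ ρ σ : Matrix a a ℂ, IsDensity ρ → IsDensity σ → D b (Φ ρ) (Φ σ) ≤ D a ρ σ)
    -- additivity under tensor products
    (hadd : ∀ (a b : Type) [Fintype a] [DecidableEq a] [Fintype b] [DecidableEq b]
      (ρ₁ σ₁ : Matrix a a ℂ) (ρ₂ σ₂ : Matrix b b ℂ),
      IsDensity ρ₁ → IsDensity σ₁ → IsDensity ρ₂ → IsDensity σ₂ →
      D (a × b) (ρ₁ ⊗ₖ ρ₂) (σ₁ ⊗ₖ σ₂) = D a ρ₁ σ₁ + D b ρ₂ σ₂)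
    -- normalization
    (hnorm : D (Fin 2) (Matrix.diagonal ![1, 0]) (Matrix.diagonal ![1/2, 1/2]) = 1)
    (ε : ℝ) (hε0 : 0 ≤ ε) (hε1 : ε < 1) :
    D (Fin 2) (Matrix.diagonal ![1, 0]) (Matrix.diagonal ![1 - (ε : ℂ), (ε : ℂ)]) =
      ENNReal.ofReal (- Real.logb 2 (1 - ε)) := by
  -- recasting the matrices
  have hq0 : Matrix.diagonal ![1, 0] = qd 0 := by
    rw [qd]
    refine congrArg Matrix.diagonal (funext fun i => ?_)
    fin_cases i <;> norm_num
  have hqhalf : Matrix.diagonal ![1/2, 1/2] = qd (1/2) := by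
    rw [qd]
    refine congrArg Matrix.diagonal (funext fun i => ?_)
    fin_cases i <;> norm_num
  have hqe : Matrix.diagonal ![1 - (ε : ℂ), (ε : ℂ)] = qd ε := by
    rw [qd]
    refine congrArg Matrix.diagonal (funext fun i => ?_)
    fin_cases i <;> push_cast <;> norm_num
  rw [hq0, hqe]
  rw [hq0, hqhalf] at hnorm
  -- the two key consequences of DPI and additivity
  have K1 : ∀ a b : ℝ, 0 ≤ a → a < 1 → 0 ≤ b → b < 1 →
      D (Fin 2) (qd 0) (qd (1 - (1 - a) * (1 - b)))
        = D (Fin 2) (qd 0) (qd a) + D (Fin 2) (qd 0) (qd b) := by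
    intro a b ha0 ha1 hb0 hb1
    have hE0 : 0 ≤ 1 - (1 - a) * (1 - b) := by nlinarith
    have hE1 : 1 - (1 - a) * (1 - b) ≤ 1 := by nlinarith
    have hDa := qd_isDensity a ha0 ha1.le
    have hDb := qd_isDensity b hb0 hb1.le
    have hD0 := qd_isDensity 0 le_rfl zero_le_one
    have hDE := qd_isDensity _ hE0 hE1
    have hK00 := qd_kron_isDensity 0 0 le_rfl zero_le_one le_rfl zero_le_one
    have hKab := qd_kron_isDensity a b ha0 ha1.le hb0 hb1.le
    have hAdd := hadd (Fin 2) (Fin 2) (qd 0) (qd a) (qd 0) (qd b) hD0 hDa hD0 hDb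
    refine le_antisymm ?_ ?_
    · have h := hdpi (Fin 2 × Fin 2) (Fin 2) (classChan T1)
        (classChan_isCPTP T1 T1_nonneg T1_sum)
        (qd 0 ⊗ₖ qd 0) (qd a ⊗ₖ qd b) hK00 hKab
      rw [chan1_apply, chan1_apply, hAdd] at h
      rw [show (1 - (1 - (0:ℝ)) * (1 - 0)) = 0 by norm_num] at h
      exact h
    · have h := hdpi (Fin 2) (Fin 2 × Fin 2) (classChan (T3 a b))
        (classChan_isCPTP (T3 a b) (T3_nonneg a b ha0 ha1.le hb0 hb1.le) (T3_sum a b))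
        (qd 0) (qd (1 - (1 - a) * (1 - b))) hD0 hDE
      rw [chan3_apply_zero, chan3_apply a b ha0 ha1 hb0 hb1, hAdd] at h
      exact h
  have K2 : ∀ a b : ℝ, 0 ≤ a → a ≤ b → b ≤ 1 →
      D (Fin 2) (qd 0) (qd a) ≤ D (Fin 2) (qd 0) (qd b) := by
    intro a b ha0 hab hb1
    rcases eq_or_lt_of_le (ha0.trans hab) with hb0 | hb0
    · have : a = 0 := le_antisymm (hab.trans hb0.symm.le) ha0
      rw [this, ← hb0]
    · set t := 1 - a / b with ht
      have ht0 : 0 ≤ t := by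
        rw [ht]
        have : a / b ≤ 1 := (div_le_one hb0).2 hab
        linarith
      have ht1 : t ≤ 1 := by
        rw [ht]
        have : 0 ≤ a / b := div_nonneg ha0 hb0.le
        linarith
      have h := hdpi (Fin 2) (Fin 2) (classChan (T2 t))
        (classChan_isCPTP (T2 t) (T2_nonneg t ht0 ht1) (T2_sum t))
        (qd 0) (qd b) (qd_isDensity 0 le_rfl zero_le_one) (qd_isDensity b (ha0.trans hab) hb1)
      rw [chan2_apply, chan2_apply] at h
      rw [show ((1 - t) * 0) = 0 by ring] at h
      rw [show ((1 - t) * b) = a by rw [ht]; field_simp; ring] at h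
      exact h
  -- the additive monotone function
  set g : ℝ → ℝ≥0∞ := fun x => D (Fin 2) (qd 0) (qd (1 - (2:ℝ) ^ (-x))) with hg
  have hrange : ∀ x : ℝ, 0 ≤ x → 0 ≤ 1 - (2:ℝ) ^ (-x) ∧ 1 - (2:ℝ) ^ (-x) < 1 := by
    intro x hx
    constructor
    · have : (2:ℝ) ^ (-x) ≤ 1 :=
        Real.rpow_le_one_of_one_le_of_nonpos one_le_two (neg_nonpos.2 hx)
      linarith
    · have : (0:ℝ) < (2:ℝ) ^ (-x) := Real.rpow_pos_of_pos two_pos _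
      linarith
  have hgmono : ∀ ⦃x y : ℝ⦄, 0 ≤ x → x ≤ y → g x ≤ g y := by
    intro x y hx hxy
    refine K2 _ _ (hrange x hx).1 ?_ (hrange y (hx.trans hxy)).2.le
    have : (2:ℝ) ^ (-y) ≤ (2:ℝ) ^ (-x) :=
      Real.rpow_le_rpow_of_exponent_le one_le_two (neg_le_neg hxy)
    linarith
  have hgadd : ∀ x y : ℝ, 0 ≤ x → 0 ≤ y → g (x + y) = g x + g y := by
    intro x y hx hy
    have hxy : 1 - (2:ℝ) ^ (-(x+y))
        = 1 - (1 - (1 - (2:ℝ) ^ (-x))) * (1 - (1 - (2:ℝ) ^ (-y))) := by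
      have : (2:ℝ) ^ (-(x+y)) = (2:ℝ) ^ (-x) * (2:ℝ) ^ (-y) := by
        rw [← Real.rpow_add two_pos]; ring_nf
      rw [this]; ring
    rw [hg]
    simp only []
    rw [hxy, K1 _ _ (hrange x hx).1 (hrange x hx).2 (hrange y hy).1 (hrange y hy).2]
  have hgone : g 1 = 1 := by
    rw [hg]
    simp only []
    rw [show (1 - (2:ℝ) ^ (-(1:ℝ))) = 1/2 by
      rw [Real.rpow_neg_one]; norm_num]
    exact hnorm
  have key := lin_of_add_mono g hgmono hgadd hgone
  -- conclusion
  set x₀ := -Real.logb 2 (1 - ε) with hx₀def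
  have hx₀ : 0 ≤ x₀ :=
    neg_nonneg.2 (Real.logb_nonpos one_lt_two (by linarith) (by linarith))
  have hex₀ : 1 - (2:ℝ) ^ (-x₀) = ε := by
    rw [hx₀def, neg_neg, Real.rpow_logb two_pos (by norm_num) (by linarith)]
    ring
  have := key x₀ hx₀
  rw [hg] at this
  simp only [] at this
  rw [hex₀] at this
  exact this
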